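/- Let c_1, c_2, … be real numbers, and in ℝ[[z]] set C(z) := 1 + c_1 z^2 + c_2 z^3 + c_3 z^4 + ⋯. For each k ≥ 1, define m̄_k := (1/(k+1)) · [u^{k+1}]{C(u)^{k+1}}, the coefficient of u^{k+1} in C(u)^{k+1} divided by k+1, and set Ā(z) := m̄_1 z^2 + m̄_2 z^3 + m̄_3 z^4 + ⋯. Then the formal power series z·exp(Ā(z)) and z/C(z) are compositional inverses of each other. -/

import Mathlib

open PowerSeries

/-- Composition `f(g)` of formal power series; this gives the usual composition
whenever `g` has zero constant term (then `coeff n (g^m) = 0` for `m > n`). -/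
noncomputable def psComp (f g : PowerSeries ℝ) : PowerSeries ℝ :=
  PowerSeries.mk fun n =>
    ∑ m ∈ Finset.range (n + 1), (PowerSeries.coeff m f) * (PowerSeries.coeff n (g ^ m))

/-- The series `C(z) = 1 + c₁ z² + c₂ z³ + ⋯` built from a sequence `(c_k)_{k ≥ 1}`. -/
noncomputable def seriesC (c : ℕ → ℝ) : PowerSeries ℝ :=
  PowerSeries.mk fun n => if n = 0 then 1 else if n = 1 then 0 else c (n - 1)

/-- `m̄_k := (1/(k+1)) · [u^{k+1}] C(u)^{k+1}`. -/
noncomputable def mbar (c : ℕ → ℝ) (k : ℕ) : ℝ :=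
  (1 / (k + 1 : ℝ)) * PowerSeries.coeff (k + 1) (seriesC c ^ (k + 1))

/-- `Ā(z) := m̄₁ z² + m̄₂ z³ + ⋯`. -/
noncomputable def seriesAbar (c : ℕ → ℝ) : PowerSeries ℝ :=
  PowerSeries.mk fun n => if n ≤ 1 then 0 else mbar c (n - 1)


lemma coeff_psComp (f g : PowerSeries ℝ) (n : ℕ) :
    coeff n (psComp f g)
      = ∑ m ∈ Finset.range (n + 1), coeff m f * coeff n (g ^ m) :=
  coeff_mk _ _

lemma coeff_pow_eq_zero {g : PowerSeries ℝ} (hg : constantCoeff g = 0)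
    {n m : ℕ} (h : n < m) : coeff n (g ^ m) = 0 := by
  have hd : (X : PowerSeries ℝ) ^ m ∣ g ^ m :=
    pow_dvd_pow_of_dvd (X_dvd_iff.mpr hg) m
  exact (X_pow_dvd_iff.mp hd) n h

/-- extend the range of the defining sum -/
lemma coeff_psComp' (f g : PowerSeries ℝ) {n N : ℕ} (hN : n < N)
    (hg : constantCoeff g = 0) :
    coeff n (psComp f g)
      = ∑ m ∈ Finset.range N, coeff m f * coeff n (g ^ m) := by
  rw [coeff_psComp]
  apply Finset.sum_subset
  · exact Finset.range_subset_range.mpr hN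
  · intro m _ hm
    rw [Finset.mem_range, not_lt] at hm
    rw [coeff_pow_eq_zero hg (by omega), mul_zero]

lemma psComp_one (g : PowerSeries ℝ) : psComp 1 g = 1 := by
  ext n
  rw [coeff_psComp, Finset.sum_eq_single 0]
  · simp
  · intro b _ hb
    simp [coeff_one, hb]
  · simp

lemma psComp_X {g : PowerSeries ℝ} (hg : constantCoeff g = 0) : psComp X g = g := by
  ext n
  rw [coeff_psComp]
  rcases n with _ | n
  · simpa using hg.symm
  · rw [Finset.sum_eq_single 1]
    · simp
    · intro b _ hb
      simp [coeff_X, hb]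
    · intro h
      exact absurd (Finset.mem_range.mpr (by omega)) h

lemma psComp_id (f : PowerSeries ℝ) : psComp f X = f := by
  ext n
  rw [coeff_psComp, Finset.sum_eq_single n]
  · simp
  · intro b _ hb
    simp [coeff_X_pow, hb.symm]
  · intro h
    exact absurd (Finset.mem_range.mpr (by omega)) h

/-- big double-sum reindexing -/
lemma sum_range_antidiagonal_eq {n : ℕ} (h : ℕ → ℕ → ℝ)
    (hv : ∀ i j, n < i + j → h i j = 0) :
    ∑ m ∈ Finset.range (n+1), ∑ p ∈ Finset.HasAntidiagonal.antidiagonal m, h p.1 p.2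
      = ∑ i ∈ Finset.range (n+1), ∑ j ∈ Finset.range (n+1), h i j := by
  have e1 : ∑ m ∈ Finset.range (n+1), ∑ p ∈ Finset.HasAntidiagonal.antidiagonal m, h p.1 p.2
      = ∑ p ∈ (Finset.range (n+1)).sigma (fun m => Finset.HasAntidiagonal.antidiagonal m),
          h p.2.1 p.2.2 :=
    (Finset.sum_sigma (Finset.range (n+1)) (fun m => Finset.HasAntidiagonal.antidiagonal m)
      (fun p => h p.2.1 p.2.2)).symm
  have e2 : ∑ i ∈ Finset.range (n+1), ∑ j ∈ Finset.range (n+1), h i j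
      = ∑ p ∈ Finset.range (n+1) ×ˢ Finset.range (n+1), h p.1 p.2 :=
    (Finset.sum_product (f := fun p => h p.1 p.2) _ _ ).symm
  rw [e1, e2]
  rw [show (Finset.range (n+1) ×ˢ Finset.range (n+1))
      = ((Finset.range (n+1) ×ˢ Finset.range (n+1)).filter (fun p => p.1 + p.2 ≤ n))
        ∪ ((Finset.range (n+1) ×ˢ Finset.range (n+1)).filter (fun p => ¬ p.1 + p.2 ≤ n))
      from (Finset.filter_union_filter_not_eq _ _).symm]
  rw [Finset.sum_union (Finset.disjoint_filter_filter_not _ _ _)]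
  have e3 : ∑ p ∈ (Finset.range (n+1) ×ˢ Finset.range (n+1)).filter
      (fun p => ¬ p.1 + p.2 ≤ n), h p.1 p.2 = 0 := by
    apply Finset.sum_eq_zero
    intro p hp
    rw [Finset.mem_filter] at hp
    exact hv _ _ (by omega)
  rw [e3, add_zero]
  apply Finset.sum_nbij' (i := fun x => (x.2.1, x.2.2))
    (j := fun p => ⟨p.1 + p.2, (p.1, p.2)⟩)
  · rintro ⟨m, i, j⟩ hm
    simp only [Finset.mem_sigma, Finset.mem_range, Finset.HasAntidiagonal.mem_antidiagonal] at hm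
    simp only [Finset.mem_filter, Finset.mem_product, Finset.mem_range]
    omega
  · rintro ⟨i, j⟩ hp
    simp only [Finset.mem_filter, Finset.mem_product, Finset.mem_range] at hp
    refine Finset.mem_sigma.mpr ⟨?_, ?_⟩
    · exact Finset.mem_range.mpr (show (i,j).1 + (i,j).2 < n + 1 by simp; omega)
    · exact Finset.HasAntidiagonal.mem_antidiagonal.mpr rfl
  · rintro ⟨m, i, j⟩ hm
    simp only [Finset.mem_sigma, Finset.mem_range, Finset.HasAntidiagonal.mem_antidiagonal] at hm
    simp [hm.2]
  · rintro ⟨i, j⟩ _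
    rfl
  · rintro ⟨m, i, j⟩ _
    rfl

-- new material
lemma constantCoeff_psComp (f g : PowerSeries ℝ) :
    constantCoeff (psComp f g) = constantCoeff f := by
  rw [← coeff_zero_eq_constantCoeff_apply, coeff_psComp]
  simp

lemma psComp_mul {g : PowerSeries ℝ} (hg : constantCoeff g = 0) (f₁ f₂ : PowerSeries ℝ) :
    psComp (f₁ * f₂) g = psComp f₁ g * psComp f₂ g := by
  ext n
  rw [coeff_psComp, coeff_mul]
  have LHS : ∑ m ∈ Finset.range (n + 1), coeff m (f₁ * f₂) * coeff n (g ^ m)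
      = ∑ i ∈ Finset.range (n+1), ∑ j ∈ Finset.range (n+1),
          coeff i f₁ * coeff j f₂ * coeff n (g ^ (i + j)) := by
    rw [← sum_range_antidiagonal_eq (fun i j => coeff i f₁ * coeff j f₂ *
        coeff n (g ^ (i + j))) (fun i j hij => by
          rw [coeff_pow_eq_zero hg hij, mul_zero])]
    apply Finset.sum_congr rfl
    intro m _
    rw [coeff_mul, Finset.sum_mul]
    apply Finset.sum_congr rfl
    intro p hp
    rw [Finset.HasAntidiagonal.mem_antidiagonal] at hp
    rw [hp]
  rw [LHS]
  have RHS : ∀ p ∈ Finset.HasAntidiagonal.antidiagonal n,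
      coeff p.1 (psComp f₁ g) * coeff p.2 (psComp f₂ g)
      = ∑ i ∈ Finset.range (n+1), ∑ j ∈ Finset.range (n+1),
          coeff i f₁ * coeff j f₂ * (coeff p.1 (g ^ i) * coeff p.2 (g ^ j)) := by
    intro p hp
    rw [Finset.HasAntidiagonal.mem_antidiagonal] at hp
    rw [coeff_psComp' f₁ g (show p.1 < n+1 by omega) hg,
        coeff_psComp' f₂ g (show p.2 < n+1 by omega) hg, Finset.sum_mul_sum]
    apply Finset.sum_congr rfl; intro i _
    apply Finset.sum_congr rfl; intro j _
    ring
  symm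
  rw [Finset.sum_congr rfl RHS, Finset.sum_comm]
  apply Finset.sum_congr rfl; intro i _
  rw [Finset.sum_comm]
  apply Finset.sum_congr rfl; intro j _
  rw [← Finset.mul_sum, ← coeff_mul, ← pow_add]

lemma psComp_pow {g : PowerSeries ℝ} (hg : constantCoeff g = 0) (f : PowerSeries ℝ) (k : ℕ) :
    psComp (f ^ k) g = (psComp f g) ^ k := by
  induction k with
  | zero => simpa using psComp_one g
  | succ k ih => rw [pow_succ, psComp_mul hg, ih, pow_succ]

lemma psComp_assoc (f g h : PowerSeries ℝ) (hg : constantCoeff g = 0)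
    (hh : constantCoeff h = 0) :
    psComp (psComp f g) h = psComp f (psComp g h) := by
  have hgh : constantCoeff (psComp g h) = 0 := by rw [constantCoeff_psComp, hg]
  ext n
  rw [coeff_psComp, coeff_psComp]
  have e1 : ∀ m ∈ Finset.range (n+1), coeff m (psComp f g) * coeff n (h ^ m)
      = ∑ k ∈ Finset.range (n+1), coeff k f * coeff m (g ^ k) * coeff n (h ^ m) := by
    intro m hm
    rw [Finset.mem_range] at hm
    rw [coeff_psComp' f g (show m < n+1 by omega) hg, Finset.sum_mul]
  rw [Finset.sum_congr rfl e1, Finset.sum_comm]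
  apply Finset.sum_congr rfl
  intro k _
  have : ∑ m ∈ Finset.range (n+1), coeff k f * coeff m (g ^ k) * coeff n (h ^ m)
      = coeff k f * ∑ m ∈ Finset.range (n+1), coeff m (g ^ k) * coeff n (h ^ m) := by
    rw [Finset.mul_sum]
    apply Finset.sum_congr rfl
    intro m _
    ring
  rw [this, ← coeff_psComp, psComp_pow hh]

lemma derivative_psComp (f g : PowerSeries ℝ) (hg : constantCoeff g = 0) :
    d⁄dX ℝ (psComp f g) = psComp (d⁄dX ℝ f) g * d⁄dX ℝ g := by
  ext n
  rw [coeff_derivative, coeff_psComp' f g (show n+1 < n+2 by omega) hg, Finset.sum_mul]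
  have e1 : ∀ m ∈ Finset.range (n+2),
      coeff m f * coeff (n+1) (g ^ m) * ((n:ℝ)+1)
        = coeff m f * coeff n (d⁄dX ℝ (g ^ m)) := by
    intro m _
    rw [coeff_derivative]
    push_cast
    ring
  rw [Finset.sum_congr rfl e1]
  rw [Finset.sum_range_succ' (fun m => coeff m f * coeff n (d⁄dX ℝ (g ^ m)))]
  have e0 : coeff 0 f * coeff n (d⁄dX ℝ (g ^ 0)) = 0 := by
    simp
  rw [e0, add_zero]
  rw [coeff_mul]
  have e2 : ∀ p ∈ Finset.HasAntidiagonal.antidiagonal n,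
      coeff p.1 (psComp (d⁄dX ℝ f) g) * coeff p.2 (d⁄dX ℝ g)
      = ∑ k ∈ Finset.range (n+1),
          coeff k (d⁄dX ℝ f) * (coeff p.1 (g ^ k) * coeff p.2 (d⁄dX ℝ g)) := by
    intro p hp
    rw [Finset.HasAntidiagonal.mem_antidiagonal] at hp
    rw [coeff_psComp' _ g (show p.1 < n+1 by omega) hg, Finset.sum_mul]
    apply Finset.sum_congr rfl; intro k _; ring
  rw [Finset.sum_congr rfl e2, Finset.sum_comm]
  apply Finset.sum_congr rfl
  intro k _
  rw [← Finset.mul_sum, ← coeff_mul]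
  have hD : d⁄dX ℝ (g ^ (k+1)) = (k+1) • (g ^ k • d⁄dX ℝ g) := by
    simpa using Derivation.leibniz_pow (d⁄dX ℝ) g (k+1)
  rw [hD, smul_eq_mul (a := g ^ k), map_nsmul, coeff_derivative, nsmul_eq_mul]
  push_cast
  ring

-- chunk 3
lemma derivative_inv_rel {V Vi : PowerSeries ℝ} (hVi : V * Vi = 1) :
    d⁄dX ℝ Vi = -(Vi ^ 2 * d⁄dX ℝ V) := by
  have h0 : d⁄dX ℝ (V * Vi) = 0 := by
    rw [hVi]; exact Derivation.map_one_eq_zero _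
  rw [Derivation.leibniz, smul_eq_mul, smul_eq_mul] at h0
  have h1 : Vi * (V * d⁄dX ℝ Vi) + Vi * (Vi * d⁄dX ℝ V) = 0 := by
    rw [← mul_add, h0, mul_zero]
  have h2 : Vi * (V * d⁄dX ℝ Vi) = d⁄dX ℝ Vi := by
    rw [← mul_assoc, mul_comm Vi V, hVi, one_mul]
  rw [h2] at h1
  linear_combination h1

lemma derivative_X_mul (V : PowerSeries ℝ) :
    d⁄dX ℝ (X * V) = V + X * d⁄dX ℝ V := by
  rw [Derivation.leibniz, smul_eq_mul, smul_eq_mul, derivative_X, mul_one]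
  ring

lemma residue_vanish {V Vi : PowerSeries ℝ} (hVi : V * Vi = 1) (t : ℕ) :
    coeff (t + 1) (Vi ^ (t + 2) * d⁄dX ℝ (X * V)) = 0 := by
  have hW : d⁄dX ℝ (Vi ^ (t + 1)) = -((t + 1 : ℕ) • (Vi ^ (t + 2) * d⁄dX ℝ V)) := by
    have h := Derivation.leibniz_pow (d⁄dX ℝ) Vi (t + 1)
    rw [h, derivative_inv_rel hVi]
    rw [Nat.add_sub_cancel]
    rw [smul_eq_mul (a := Vi ^ t)]
    rw [← smul_neg]
    congr 1
    ring
  have key : Vi ^ (t + 2) * d⁄dX ℝ (X * V)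
      = Vi ^ (t + 1) + X * (Vi ^ (t + 2) * d⁄dX ℝ V) := by
    rw [derivative_X_mul]
    calc Vi ^ (t + 2) * (V + X * d⁄dX ℝ V)
        = Vi ^ (t + 1) * (V * Vi) + X * (Vi ^ (t + 2) * d⁄dX ℝ V) := by ring
      _ = Vi ^ (t + 1) + X * (Vi ^ (t + 2) * d⁄dX ℝ V) := by rw [hVi, mul_one]
  rw [key, map_add, coeff_succ_X_mul]
  have hc : ((t : ℝ) + 1) * coeff t (Vi ^ (t + 2) * d⁄dX ℝ V)
      = -(((t : ℝ) + 1) * coeff (t + 1) (Vi ^ (t + 1))) := by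
    have := congrArg (coeff t) hW
    rw [map_neg, map_nsmul, nsmul_eq_mul] at this
    have hDW : coeff t (d⁄dX ℝ (Vi ^ (t + 1)))
        = coeff (t + 1) (Vi ^ (t + 1)) * ((t : ℝ) + 1) := coeff_derivative _ _
    rw [hDW] at this
    push_cast at this ⊢
    linarith [this]
  have ht : ((t : ℝ) + 1) ≠ 0 := by positivity
  have : coeff t (Vi ^ (t + 2) * d⁄dX ℝ V) = -coeff (t + 1) (Vi ^ (t + 1)) :=
    mul_left_cancel₀ ht (by linarith [hc])
  rw [this]
  ring

lemma residue_key {V Vi : PowerSeries ℝ} (hVi : V * Vi = 1) (P : PowerSeries ℝ) (k : ℕ) :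
    coeff k (psComp P (X * V) * (Vi ^ (k + 1) * d⁄dX ℝ (X * V))) = coeff k P := by
  have hF0 : constantCoeff (X * V) = 0 := by simp
  set Q := Vi ^ (k + 1) * d⁄dX ℝ (X * V) with hQ
  rw [coeff_mul]
  have e1 : ∀ p ∈ Finset.HasAntidiagonal.antidiagonal k,
      coeff p.1 (psComp P (X * V)) * coeff p.2 Q
      = ∑ m ∈ Finset.range (k + 1), coeff m P *
          (coeff p.1 ((X * V) ^ m) * coeff p.2 Q) := by
    intro p hp
    rw [Finset.HasAntidiagonal.mem_antidiagonal] at hp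
    rw [coeff_psComp' P _ (show p.1 < k + 1 by omega) hF0, Finset.sum_mul]
    apply Finset.sum_congr rfl; intro m _; ring
  rw [Finset.sum_congr rfl e1, Finset.sum_comm]
  have e2 : ∀ m ∈ Finset.range (k + 1),
      ∑ p ∈ Finset.HasAntidiagonal.antidiagonal k, coeff m P *
        (coeff p.1 ((X * V) ^ m) * coeff p.2 Q)
      = coeff m P * coeff k ((X * V) ^ m * Q) := by
    intro m _
    rw [← Finset.mul_sum, ← coeff_mul]
  rw [Finset.sum_congr rfl e2]
  have e3 : ∀ m, m < k → coeff k ((X * V) ^ m * Q) = 0 := by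
    intro m hm
    obtain ⟨t, ht⟩ : ∃ t, k = t + 1 + m := ⟨k - m - 1, by omega⟩
    have hprod : (X * V) ^ m * Q
        = X ^ m * (Vi ^ (t + 2) * d⁄dX ℝ (X * V) * (V ^ m * Vi ^ m)) := by
      rw [hQ, mul_pow, show k + 1 = (t + 2) + m by omega, pow_add Vi]
      ring
    have hVVi : V ^ m * Vi ^ m = 1 := by rw [← mul_pow, hVi, one_pow]
    rw [hprod, hVVi, mul_one, ht,
      coeff_X_pow_mul (Vi ^ (t + 2) * d⁄dX ℝ (X * V)) m (t + 1)]
    exact residue_vanish hVi t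
  have e4 : coeff k ((X * V) ^ k * Q) = 1 := by
    have : (X * V) ^ k * Q = X ^ k * (Vi * d⁄dX ℝ (X * V) * (V ^ k * Vi ^ k)) := by
      rw [hQ, mul_pow, pow_succ]
      ring
    have hVVi : V ^ k * Vi ^ k = 1 := by rw [← mul_pow, hVi, one_pow]
    have h5 := coeff_X_pow_mul (Vi * d⁄dX ℝ (X * V) * (V ^ k * Vi ^ k)) k 0
    rw [zero_add] at h5
    rw [this, h5, hVVi, mul_one, coeff_zero_eq_constantCoeff, map_mul]
    have : constantCoeff (d⁄dX ℝ (X * V)) = constantCoeff V := by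
      rw [← coeff_zero_eq_constantCoeff_apply, coeff_derivative, coeff_succ_X_mul]
      simp
    rw [this]
    have := congrArg (constantCoeff) hVi
    rw [map_mul, map_one] at this
    linear_combination this
  rw [Finset.sum_eq_single k]
  · rw [e4, mul_one]
  · intro m hm hmk
    rw [Finset.mem_range] at hm
    rw [e3 m (by omega), mul_zero]
  · intro h
    exact absurd (Finset.mem_range.mpr (by omega)) h

-- chunk 4
lemma coeff_mul_congr {A B P Q : PowerSeries ℝ} {n : ℕ}
    (hA0 : constantCoeff A = 0) (hB0 : constantCoeff B = 0)
    (hP0 : constantCoeff P = 0) (hQ0 : constantCoeff Q = 0)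
    (hAB : ∀ i < n, coeff i A = coeff i B)
    (hPQ : ∀ i < n, coeff i P = coeff i Q) :
    ∀ l ≤ n, coeff l (A * P) = coeff l (B * Q) := by
  intro l hl
  rw [coeff_mul, coeff_mul]
  apply Finset.sum_congr rfl
  rintro ⟨i, j⟩ hp
  rw [Finset.HasAntidiagonal.mem_antidiagonal] at hp
  simp only
  by_cases hi : i < n
  · by_cases hj : j < n
    · rw [hAB i hi, hPQ j hj]
    · have hi0 : i = 0 := by omega
      subst hi0
      rw [coeff_zero_eq_constantCoeff, hA0, hB0, zero_mul, zero_mul]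
  · have hj0 : j = 0 := by omega
    subst hj0
    rw [coeff_zero_eq_constantCoeff, hP0, hQ0, mul_zero, mul_zero]

lemma pow_coeff_congr {A B : PowerSeries ℝ} {n : ℕ}
    (hA0 : constantCoeff A = 0) (hB0 : constantCoeff B = 0)
    (hAB : ∀ i < n, coeff i A = coeff i B) :
    ∀ m, 2 ≤ m → ∀ l ≤ n, coeff l (A ^ m) = coeff l (B ^ m) := by
  intro m
  induction m with
  | zero => omega
  | succ m ih =>
    intro hm l hl
    rcases Nat.lt_or_ge m 2 with h2 | h2
    · -- m + 1 = 2, m = 1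
      have : m = 1 := by omega
      subst this
      rw [pow_succ, pow_one, pow_succ, pow_one]
      exact coeff_mul_congr hA0 hB0 hA0 hB0 hAB hAB l hl
    · rw [pow_succ, pow_succ]
      have hP0 : constantCoeff (A ^ m) = 0 := by
        rw [map_pow, hA0, zero_pow (by omega)]
      have hQ0 : constantCoeff (B ^ m) = 0 := by
        rw [map_pow, hB0, zero_pow (by omega)]
      exact coeff_mul_congr hP0 hQ0 hA0 hB0
        (fun i hi => ih h2 i (by omega)) hAB l hl

lemma psComp_coeff_congr {F A B : PowerSeries ℝ}
    (hA0 : constantCoeff A = 0) (hB0 : constantCoeff B = 0) {n : ℕ} (hn : 1 ≤ n)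
    (hAB : ∀ i < n, coeff i A = coeff i B) :
    coeff n (psComp F A)
      = coeff n (psComp F B) + coeff 1 F * (coeff n A - coeff n B) := by
  rw [coeff_psComp, coeff_psComp]
  have e : ∀ m ∈ Finset.range (n + 1),
      coeff m F * coeff n (A ^ m)
      = coeff m F * coeff n (B ^ m)
        + (if m = 1 then coeff 1 F * (coeff n A - coeff n B) else 0) := by
    intro m _
    rcases m with _ | _ | m
    · simp
    · simp only [pow_one, if_pos rfl, if_true, eq_self_iff_true]
      ring
    · rw [if_neg (by omega), add_zero,
        pow_coeff_congr hA0 hB0 hAB (m + 2) (by omega) n le_rfl]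
  rw [Finset.sum_congr rfl e, Finset.sum_add_distrib, Finset.sum_ite_eq' (Finset.range (n+1)) 1]
  rw [if_pos (Finset.mem_range.mpr (by omega))]

noncomputable def invSeq (F : PowerSeries ℝ) : ℕ → ℝ
  | 0 => 0
  | 1 => 1
  | n + 2 =>
    -(coeff (n + 2) (psComp F
      (PowerSeries.mk fun i => if h : i < n + 2 then invSeq F i else 0)))
  termination_by n => n
  decreasing_by exact h

lemma stepA (F : PowerSeries ℝ) (hF0 : constantCoeff F = 0) (hF1 : coeff 1 F = 1) :
    ∃ G : PowerSeries ℝ, constantCoeff G = 0 ∧ coeff 1 G = 1 ∧ psComp F G = X := by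
  set G : PowerSeries ℝ := PowerSeries.mk (invSeq F) with hG
  have hG0 : constantCoeff G = 0 := by
    rw [← coeff_zero_eq_constantCoeff_apply, hG, coeff_mk]
    simp [invSeq]
  have hG1 : coeff 1 G = 1 := by
    rw [hG, coeff_mk]
    simp [invSeq]
  refine ⟨G, hG0, hG1, ?_⟩
  ext n
  rcases n with _ | _ | n
  · rw [coeff_zero_eq_constantCoeff, constantCoeff_psComp, hF0]
    simp
  · rw [coeff_psComp]
    rw [Finset.sum_range_succ, Finset.sum_range_one]
    simp [hF1, hG1]
  · set B : PowerSeries ℝ := PowerSeries.mk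
      (fun i => if h : i < n + 2 then invSeq F i else 0) with hB
    have hB0 : constantCoeff B = 0 := by
      rw [← coeff_zero_eq_constantCoeff_apply, hB, coeff_mk, dif_pos (by omega)]
      simp [invSeq]
    have hagree : ∀ i < n + 2, coeff i G = coeff i B := by
      intro i hi
      rw [hG, hB, coeff_mk, coeff_mk, dif_pos hi]
    have hBn : coeff (n + 2) B = 0 := by
      rw [hB, coeff_mk, dif_neg (by omega)]
    have hGn : coeff (n + 2) G = -(coeff (n + 2) (psComp F B)) := by
      rw [hG, coeff_mk]
      rw [invSeq]
    rw [psComp_coeff_congr hG0 hB0 (by omega) hagree, hGn, hBn, hF1]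
    simp [coeff_X]

lemma psComp_inv_pair (F : PowerSeries ℝ) (hF0 : constantCoeff F = 0)
    (hF1 : coeff 1 F = 1) :
    ∃ G : PowerSeries ℝ, constantCoeff G = 0 ∧ coeff 1 G = 1 ∧
      psComp F G = X ∧ psComp G F = X := by
  obtain ⟨G, hG0, hG1, hFG⟩ := stepA F hF0 hF1
  obtain ⟨H, hH0, hH1, hGH⟩ := stepA G hG0 hG1
  have hFH : F = H := by
    have a1 : psComp F (psComp G H) = psComp F X := by rw [hGH]
    rw [psComp_id] at a1
    rw [← psComp_assoc F G H hG0 hH0, hFG, psComp_X hH0] at a1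
    exact a1.symm
  exact ⟨G, hG0, hG1, hFG, by rw [hFH]; exact hGH⟩

lemma ode_unique {q A B : PowerSeries ℝ} (hq : constantCoeff q = 0)
    (hA : d⁄dX ℝ A = q * A) (hB : d⁄dX ℝ B = q * B)
    (h0 : constantCoeff A = constantCoeff B) : A = B := by
  ext n
  induction n using Nat.strong_induction_on with
  | _ n ih =>
    rcases n with _ | n
    · rw [coeff_zero_eq_constantCoeff_apply, coeff_zero_eq_constantCoeff_apply]
      exact h0
    · have cA : coeff (n + 1) A * ((n : ℝ) + 1) = coeff n (q * A) := by
        rw [← coeff_derivative, hA]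
      have cB : coeff (n + 1) B * ((n : ℝ) + 1) = coeff n (q * B) := by
        rw [← coeff_derivative, hB]
      have heq : coeff n (q * A) = coeff n (q * B) := by
        rw [coeff_mul, coeff_mul]
        apply Finset.sum_congr rfl
        rintro ⟨i, j⟩ hp
        rw [Finset.HasAntidiagonal.mem_antidiagonal] at hp
        simp only
        rcases Nat.eq_zero_or_pos i with h | h
        · subst h
          rw [coeff_zero_eq_constantCoeff, hq, zero_mul, zero_mul]
        · rw [ih j (by omega)]
      have hne : ((n : ℝ) + 1) ≠ 0 := by positivity
      have := cA.trans (heq.trans cB.symm)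
      exact mul_right_cancel₀ hne this

-- chunk 5
lemma derivative_exp_real : d⁄dX ℝ (exp ℝ) = exp ℝ := by
  ext n
  rw [coeff_derivative, coeff_exp, coeff_exp]
  rw [map_div₀, map_div₀, map_one, map_natCast, map_natCast]
  have h1 : ((n + 1).factorial : ℝ) = ((n : ℝ) + 1) * (n.factorial : ℝ) := by
    rw [Nat.factorial_succ]
    push_cast
    ring
  rw [h1]
  have h2 : ((n : ℝ) + 1) ≠ 0 := by positivity
  have h3 : ((n.factorial : ℝ)) ≠ 0 := by positivity
  field_simp


/-- With `C(z) = 1 + c₁ z² + c₂ z³ + ⋯`,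
`m̄_k = (1/(k+1))·[u^{k+1}]{C(u)^{k+1}}` and `Ā(z) = m̄₁ z² + m̄₂ z³ + ⋯`, the formal
power series `z·exp(Ā(z))` and `z/C(z)` are compositional inverses of each other. -/
theorem z_exp_Abar_inverse_of_z_div_C (c : ℕ → ℝ) :
    psComp (PowerSeries.X * psComp (PowerSeries.exp ℝ) (seriesAbar c))
        (PowerSeries.X * (seriesC c)⁻¹) = PowerSeries.X ∧
    psComp (PowerSeries.X * (seriesC c)⁻¹)
        (PowerSeries.X * psComp (PowerSeries.exp ℝ) (seriesAbar c)) = PowerSeries.X := by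
  set C : PowerSeries ℝ := seriesC c with hC
  set Ab : PowerSeries ℝ := seriesAbar c with hAb
  set E : PowerSeries ℝ := psComp (exp ℝ) Ab with hE
  set F : PowerSeries ℝ := X * C⁻¹ with hF
  have hC0 : constantCoeff C = 1 := by
    rw [hC, ← coeff_zero_eq_constantCoeff_apply, seriesC, coeff_mk]
    simp
  have hC1 : coeff 1 C = 0 := by
    rw [hC, seriesC, coeff_mk]
    simp
  have hCinv : C * C⁻¹ = 1 := PowerSeries.mul_inv_cancel _ (by rw [hC0]; norm_num)
  have hCinv0 : constantCoeff C⁻¹ = 1 := by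
    rw [constantCoeff_inv, hC0, inv_one]
  have hA0 : constantCoeff Ab = 0 := by
    rw [hAb, ← coeff_zero_eq_constantCoeff_apply, seriesAbar, coeff_mk]
    simp
  have hA1 : coeff 1 Ab = 0 := by
    rw [hAb, seriesAbar, coeff_mk]
    simp
  -- key coefficient identity for the derivative
  have hDA : ∀ n : ℕ, coeff n (d⁄dX ℝ Ab) = coeff (n + 1) (C ^ (n + 1)) := by
    intro n
    rw [coeff_derivative]
    rcases n with _ | n
    · rw [hA1, zero_mul, pow_one, hC1]
    · rw [hAb, seriesAbar, coeff_mk, if_neg (by omega)]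
      rw [show n + 1 + 1 - 1 = n + 1 from rfl, mbar]
      have : ((n : ℝ) + 1 + 1) ≠ 0 := by positivity
      rw [← hC]
      push_cast
      field_simp
  have hDA0 : constantCoeff (d⁄dX ℝ Ab) = 0 := by
    rw [← coeff_zero_eq_constantCoeff_apply, hDA 0, pow_one, hC1]
  have hF0 : constantCoeff F = 0 := by
    rw [hF, map_mul, constantCoeff_X, zero_mul]
  have hF1 : coeff 1 F = 1 := by
    rw [hF, coeff_succ_X_mul, coeff_zero_eq_constantCoeff, hCinv0]
  obtain ⟨G₀, hG00, hG01, hFG, hGF⟩ := psComp_inv_pair F hF0 hF1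
  set U : PowerSeries ℝ := PowerSeries.mk (fun n => coeff (n + 1) G₀) with hU
  have hGU : G₀ = X * U := by
    ext n
    rcases n with _ | n
    · simp only [coeff_zero_eq_constantCoeff_apply]
      rw [hG00, map_mul, constantCoeff_X, zero_mul]
    · rw [coeff_succ_X_mul, hU, coeff_mk]
  have hU0 : constantCoeff U = 1 := by
    rw [← coeff_zero_eq_constantCoeff_apply, hU, coeff_mk]
    exact hG01
  have hUinv : U * U⁻¹ = 1 := PowerSeries.mul_inv_cancel _ (by rw [hU0]; norm_num)
  -- psComp U F = C
  have hXne : (X : PowerSeries ℝ) ≠ 0 := X_ne_zero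
  have hCF : psComp U F = C := by
    have h1 : psComp G₀ F = X := hGF
    rw [hGU, psComp_mul hF0, psComp_X hF0, hF] at h1
    -- h1 : X * C⁻¹ * psComp U F = X
    have h2 : X * (C⁻¹ * psComp U (X * C⁻¹)) = X * 1 := by
      rw [mul_one, ← mul_assoc]
      exact h1
    have h3 : C⁻¹ * psComp U (X * C⁻¹) = 1 := mul_left_cancel₀ hXne h2
    have h4 : C * (C⁻¹ * psComp U (X * C⁻¹)) = C * 1 := by rw [h3]
    rw [mul_one, ← mul_assoc, hCinv, one_mul] at h4
    rw [hF]
    exact h4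
  -- derivative identity: DU * U⁻¹ = D Ab
  have hDU : d⁄dX ℝ U * U⁻¹ = d⁄dX ℝ Ab := by
    ext n
    have hVi : C⁻¹ * C = 1 := by rw [mul_comm]; exact hCinv
    have rk := residue_key hVi (d⁄dX ℝ U * U⁻¹) n
    rw [← hF] at rk
    -- simplify the left side of rk
    have e1 : psComp (d⁄dX ℝ U * U⁻¹) F = psComp (d⁄dX ℝ U) F * psComp U⁻¹ F :=
      psComp_mul hF0 _ _
    have e2 : psComp (d⁄dX ℝ U) F * d⁄dX ℝ F = d⁄dX ℝ C := by
      rw [← derivative_psComp U F hF0, hCF]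
    have e3 : psComp U⁻¹ F * C = 1 := by
      have h : psComp U F * psComp U⁻¹ F = 1 := by
        rw [← psComp_mul hF0, hUinv, psComp_one]
      rw [hCF] at h
      linear_combination h
    have e4 : psComp (d⁄dX ℝ U * U⁻¹) F * (C ^ (n + 1) * d⁄dX ℝ F)
        = d⁄dX ℝ C * C ^ n := by
      calc psComp (d⁄dX ℝ U * U⁻¹) F * (C ^ (n + 1) * d⁄dX ℝ F)
          = (psComp (d⁄dX ℝ U) F * d⁄dX ℝ F) * (psComp U⁻¹ F * C) * C ^ n := by
            rw [e1, pow_succ]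
            ring
        _ = d⁄dX ℝ C * C ^ n := by rw [e2, e3, mul_one]
    rw [hF, e4] at rk
    -- coeff n (DC * C^n) = coeff (n+1) (C^(n+1))
    have e5 : coeff n (d⁄dX ℝ C * C ^ n) = coeff (n + 1) (C ^ (n + 1)) := by
      have hD : d⁄dX ℝ (C ^ (n + 1)) = (n + 1) • (C ^ n • d⁄dX ℝ C) := by
        simpa using Derivation.leibniz_pow (d⁄dX ℝ) C (n + 1)
      have := congrArg (coeff n) hD
      rw [coeff_derivative, smul_eq_mul (a := C ^ n), map_nsmul, nsmul_eq_mul] at this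
      have hne : ((n : ℝ) + 1) ≠ 0 := by positivity
      have : coeff (n + 1) (C ^ (n + 1)) = coeff n (C ^ n * d⁄dX ℝ C) := by
        apply mul_right_cancel₀ hne
        push_cast at this ⊢
        linarith [this]
      rw [this, mul_comm]
    rw [e5] at rk
    rw [← rk, hDA n]
  have hDUeq : d⁄dX ℝ U = d⁄dX ℝ Ab * U := by
    have h1 : d⁄dX ℝ U * U⁻¹ * U = d⁄dX ℝ Ab * U := by rw [hDU]
    rw [mul_assoc, mul_comm U⁻¹ U, hUinv, mul_one] at h1
    exact h1
  -- E satisfies the same ODE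
  have hE0 : constantCoeff E = 1 := by
    rw [hE, constantCoeff_psComp, constantCoeff_exp]
  have hDE : d⁄dX ℝ E = d⁄dX ℝ Ab * E := by
    rw [hE, derivative_psComp _ _ hA0, derivative_exp_real, ← hE, mul_comm]
  have hUE : U = E := ode_unique hDA0 hDUeq hDE (by rw [hU0, hE0])
  have hGE : G₀ = X * E := by rw [hGU, hUE]
  constructor
  · rw [← hGE]
    exact hGF
  · rw [← hGE]
    exact hFG
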